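/- A finite sequence of alternating quantum-classical interactions I_A^{(1)}, I_B^{(1)}, ..., I_A^{(n)}, I_B^{(n)}, where each I_A^{(k)} acts only on system A and the classical mediator G and each I_B^{(k)} acts only on system B and G, maps every initial state of the form σ_AB ⊗ p_G with σ_AB separable to a state whose AB-marginal is separable. In other words, interactions between two quantum systems mediated by a classical system cannot generate entanglement (GPT no-go theorem, quantum instance). -/

import Mathlib

open Matrix Finset
open scoped Kronecker ComplexOrder

/-- Extend a map on `A`-matrices to act on the first factor of `A × R`-matrices
(identity on the second factor). -/
noncomputable def blockFst {A B R : Type*} [Fintype A] [Fintype B] [Fintype R]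
    (E : Matrix A A ℂ →ₗ[ℂ] Matrix B B ℂ)
    (M : Matrix (A × R) (A × R) ℂ) : Matrix (B × R) (B × R) ℂ :=
  fun p q => E (fun i j => M (i, p.2) (j, q.2)) p.1 q.1

/-- Extend a map on `B`-matrices to act on the second factor of `R × B`-matrices. -/
noncomputable def blockSnd {B C R : Type*} [Fintype B] [Fintype C] [Fintype R]
    (E : Matrix B B ℂ →ₗ[ℂ] Matrix C C ℂ)
    (M : Matrix (R × B) (R × B) ℂ) : Matrix (R × C) (R × C) ℂ :=
  fun p q => E (fun i j => M (p.1, i) (q.1, j)) p.2 q.2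

/-- Complete positivity: the extension by any finite-dimensional identity preserves
positive semidefiniteness. -/
def IsCP {A : Type*} [Fintype A] (E : Matrix A A ℂ →ₗ[ℂ] Matrix A A ℂ) : Prop :=
  ∀ (R : Type) [Fintype R] [DecidableEq R],
    ∀ M : Matrix (A × R) (A × R) ℂ, M.PosSemidef → (blockFst E M).PosSemidef

def TraceNonincreasing {A : Type*} [Fintype A]
    (E : Matrix A A ℂ →ₗ[ℂ] Matrix A A ℂ) : Prop :=
  ∀ M : Matrix A A ℂ, M.PosSemidef → ((E M).trace).re ≤ (M.trace).re

def TracePreserving {A : Type*} [Fintype A]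
    (E : Matrix A A ℂ →ₗ[ℂ] Matrix A A ℂ) : Prop :=
  ∀ M : Matrix A A ℂ, (E M).trace = M.trace

/-- The tensor product map `E_A ⊗ E_B` acting on `(A × B)`-matrices. -/
noncomputable def prodMap {A B : Type*} [Fintype A] [Fintype B]
    (EA : Matrix A A ℂ →ₗ[ℂ] Matrix A A ℂ) (EB : Matrix B B ℂ →ₗ[ℂ] Matrix B B ℂ)
    (M : Matrix (A × B) (A × B) ℂ) : Matrix (A × B) (A × B) ℂ :=
  blockSnd EB (blockFst EA M)

/-- The cone of separable positive operators. -/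
def SepCone {A B : Type*} [Fintype A] [Fintype B]
    (M : Matrix (A × B) (A × B) ℂ) : Prop :=
  ∃ (n : ℕ) (σA : Fin n → Matrix A A ℂ) (σB : Fin n → Matrix B B ℂ),
    (∀ i, (σA i).PosSemidef) ∧ (∀ i, (σB i).PosSemidef) ∧
    M = ∑ i, σA i ⊗ₖ σB i

def IsDensity {A : Type*} [Fintype A] (ρ : Matrix A A ℂ) : Prop :=
  ρ.PosSemidef ∧ ρ.trace = 1

/-- Separable state: convex combination of product density operators. -/
def SepState {A B : Type*} [Fintype A] [Fintype B]
    (M : Matrix (A × B) (A × B) ℂ) : Prop :=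
  ∃ (n : ℕ) (p : Fin n → ℝ) (σA : Fin n → Matrix A A ℂ) (σB : Fin n → Matrix B B ℂ),
    (∀ i, 0 ≤ p i) ∧ (∑ i, p i = 1) ∧
    (∀ i, IsDensity (σA i)) ∧ (∀ i, IsDensity (σB i)) ∧
    M = ∑ i, (p i : ℂ) • (σA i ⊗ₖ σB i)

/-- One round of an A–G quantum-classical interaction acting on a `G`-indexed ensemble of
joint `A ⊗ B` operators: the classical register is measured and updated while the CP map
`E g g'` acts locally on `A`. -/
noncomputable def stepA {A B G : Type*} [Fintype A] [Fintype B] [Fintype G]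
    (E : G → G → (Matrix A A ℂ →ₗ[ℂ] Matrix A A ℂ))
    (ρ : G → Matrix (A × B) (A × B) ℂ) : G → Matrix (A × B) (A × B) ℂ :=
  fun g' => ∑ g, blockFst (E g g') (ρ g)

/-- One round of a B–G quantum-classical interaction, acting locally on `B`. -/
noncomputable def stepB {A B G : Type*} [Fintype A] [Fintype B] [Fintype G]
    (E : G → G → (Matrix B B ℂ →ₗ[ℂ] Matrix B B ℂ))
    (ρ : G → Matrix (A × B) (A × B) ℂ) : G → Matrix (A × B) (A × B) ℂ :=
  fun g' => ∑ g, blockSnd (E g g') (ρ g)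

/-- A quantum-classical interaction: each branch is completely positive and for each classical
input the total map is trace preserving. -/
def IsQCInteraction {A G : Type*} [Fintype A] [Fintype G]
    (E : G → G → (Matrix A A ℂ →ₗ[ℂ] Matrix A A ℂ)) : Prop :=
  (∀ g g', IsCP (E g g')) ∧
  (∀ g, ∀ M : Matrix A A ℂ, ∑ g', ((E g g') M).trace = M.trace)

/-- `n` rounds of alternating A–G and B–G quantum-classical interactions. -/
noncomputable def evolve {A B G : Type*} [Fintype A] [Fintype B] [Fintype G]
    (IA : ℕ → G → G → (Matrix A A ℂ →ₗ[ℂ] Matrix A A ℂ))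
    (IB : ℕ → G → G → (Matrix B B ℂ →ₗ[ℂ] Matrix B B ℂ)) :
    ℕ → (G → Matrix (A × B) (A × B) ℂ) → (G → Matrix (A × B) (A × B) ℂ)
  | 0, ρ => ρ
  | n + 1, ρ => stepB (IB n) (stepA (IA n) (evolve IA IB n ρ))

section Aux

variable {A B G : Type*} [Fintype A] [Fintype B] [Fintype G]

lemma psd_smul_real {M : Matrix A A ℂ} (hM : M.PosSemidef) {c : ℝ} (hc : 0 ≤ c) :
    ((c : ℂ) • M).PosSemidef := by
  constructor
  · show ((c : ℂ) • M)ᴴ = _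
    rw [Matrix.conjTranspose_smul, hM.1.eq]
    simp
  · intro x
    have h := mul_nonneg (show (0 : ℂ) ≤ c by exact_mod_cast hc) (hM.2 x)
    simp only [Finsupp.mul_sum] at h
    convert h using 1
    simp only [Matrix.smul_apply, smul_eq_mul]
    exact Finsupp.sum_congr fun i _ => Finsupp.sum_congr fun j _ => by ring

/-- A CP map preserves positive semidefiniteness. -/
lemma IsCP.psd {E : Matrix A A ℂ →ₗ[ℂ] Matrix A A ℂ} (hE : IsCP E)
    {M : Matrix A A ℂ} (hM : M.PosSemidef) : (E M).PosSemidef := by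
  have hM' : Matrix.PosSemidef (fun (p q : A × PUnit) => M p.1 q.1) :=
    Matrix.PosSemidef.submatrix hM (fun p : A × PUnit => p.1)
  have h := hE PUnit (fun p q => M p.1 q.1) hM'
  have := h.submatrix (fun i : A => (i, PUnit.unit))
  convert this using 2
  rfl

lemma blockFst_kron (E : Matrix A A ℂ →ₗ[ℂ] Matrix A A ℂ)
    (σA : Matrix A A ℂ) (σB : Matrix B B ℂ) :
    blockFst E (σA ⊗ₖ σB) = (E σA) ⊗ₖ σB := by
  ext ⟨i, k⟩ ⟨j, l⟩
  show E (fun a b => σA a b * σB k l) i j = E σA i j * σB k l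
  have : (fun a b => σA a b * σB k l) = σB k l • σA := by
    ext a b; simp [Matrix.smul_apply, mul_comm]
  rw [this, _root_.map_smul]
  simp [Matrix.smul_apply, mul_comm]

lemma blockSnd_kron (E : Matrix B B ℂ →ₗ[ℂ] Matrix B B ℂ)
    (σA : Matrix A A ℂ) (σB : Matrix B B ℂ) :
    blockSnd E (σA ⊗ₖ σB) = σA ⊗ₖ (E σB) := by
  ext ⟨i, k⟩ ⟨j, l⟩
  show E (fun a b => σA i j * σB a b) k l = σA i j * E σB k l
  have : (fun a b => σA i j * σB a b) = σA i j • σB := by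
    ext a b; simp [Matrix.smul_apply]
  rw [this, _root_.map_smul]
  simp [Matrix.smul_apply]

lemma blockFst_sum {ι : Type*} (s : Finset ι) (E : Matrix A A ℂ →ₗ[ℂ] Matrix A A ℂ)
    (f : ι → Matrix (A × B) (A × B) ℂ) :
    blockFst E (∑ i ∈ s, f i) = ∑ i ∈ s, blockFst E (f i) := by
  ext p q
  show E (fun i j => (∑ k ∈ s, f k) (i, p.2) (j, q.2)) p.1 q.1 = _
  have : (fun i j => (∑ k ∈ s, f k) (i, p.2) (j, q.2))
      = ∑ k ∈ s, (fun i j => f k (i, p.2) (j, q.2)) := by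
    ext i j; simp [Matrix.sum_apply]
  erw [this, map_sum]
  simp only [Matrix.sum_apply]
  rfl

lemma blockSnd_sum {ι : Type*} (s : Finset ι) (E : Matrix B B ℂ →ₗ[ℂ] Matrix B B ℂ)
    (f : ι → Matrix (A × B) (A × B) ℂ) :
    blockSnd E (∑ i ∈ s, f i) = ∑ i ∈ s, blockSnd E (f i) := by
  ext p q
  show E (fun i j => (∑ k ∈ s, f k) (p.1, i) (q.1, j)) p.2 q.2 = _
  have : (fun i j => (∑ k ∈ s, f k) (p.1, i) (q.1, j))
      = ∑ k ∈ s, (fun i j => f k (p.1, i) (q.1, j)) := by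
    ext i j; simp [Matrix.sum_apply]
  erw [this, map_sum]
  simp only [Matrix.sum_apply]
  rfl

lemma sepCone_zero : SepCone (0 : Matrix (A × B) (A × B) ℂ) :=
  ⟨0, fun i => 0, fun i => 0, fun i => i.elim0, fun i => i.elim0, by simp⟩

lemma sepCone_add {M N : Matrix (A × B) (A × B) ℂ} (hM : SepCone M) (hN : SepCone N) :
    SepCone (M + N) := by
  obtain ⟨m, σA, σB, hA, hB, rfl⟩ := hM
  obtain ⟨k, τA, τB, hA', hB', rfl⟩ := hN
  refine ⟨m + k, Fin.append σA τA, Fin.append σB τB, ?_, ?_, ?_⟩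
  · intro i
    refine Fin.addCases (fun j => ?_) (fun j => ?_) i
    · rw [Fin.append_left]; exact hA j
    · rw [Fin.append_right]; exact hA' j
  · intro i
    refine Fin.addCases (fun j => ?_) (fun j => ?_) i
    · rw [Fin.append_left]; exact hB j
    · rw [Fin.append_right]; exact hB' j
  · rw [Fin.sum_univ_add]
    simp [Fin.append_left, Fin.append_right]

lemma sepCone_sum {ι : Type*} (s : Finset ι) (f : ι → Matrix (A × B) (A × B) ℂ)
    (h : ∀ i ∈ s, SepCone (f i)) : SepCone (∑ i ∈ s, f i) :=
  Finset.sum_induction f SepCone (fun _ _ => sepCone_add) sepCone_zero h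

lemma sepCone_smul {M : Matrix (A × B) (A × B) ℂ} (hM : SepCone M) {c : ℝ} (hc : 0 ≤ c) :
    SepCone ((c : ℂ) • M) := by
  obtain ⟨m, σA, σB, hA, hB, rfl⟩ := hM
  refine ⟨m, fun i => (c : ℂ) • σA i, σB, fun i => psd_smul_real (hA i) hc, hB, ?_⟩
  rw [Finset.smul_sum]
  simp [Matrix.smul_kronecker]

lemma sepCone_blockFst {E : Matrix A A ℂ →ₗ[ℂ] Matrix A A ℂ} (hE : IsCP E)
    {M : Matrix (A × B) (A × B) ℂ} (hM : SepCone M) : SepCone (blockFst E M) := by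
  obtain ⟨m, σA, σB, hA, hB, rfl⟩ := hM
  rw [blockFst_sum]
  refine ⟨m, fun i => E (σA i), σB, fun i => hE.psd (hA i), hB, ?_⟩
  exact Finset.sum_congr rfl fun i _ => blockFst_kron _ _ _

lemma sepCone_blockSnd {E : Matrix B B ℂ →ₗ[ℂ] Matrix B B ℂ} (hE : IsCP E)
    {M : Matrix (A × B) (A × B) ℂ} (hM : SepCone M) : SepCone (blockSnd E M) := by
  obtain ⟨m, σA, σB, hA, hB, rfl⟩ := hM
  rw [blockSnd_sum]
  refine ⟨m, σA, fun i => E (σB i), hA, fun i => hE.psd (hB i), ?_⟩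
  exact Finset.sum_congr rfl fun i _ => blockSnd_kron _ _ _

end Aux

/-- GPT no-go theorem, quantum instance: a finite sequence of alternating quantum-classical
interactions mediated by a classical system `G` maps every initial state `σ_AB ⊗ p_G` with
`σ_AB` separable to a state whose `AB`-marginal is separable. Classical mediators cannot
generate entanglement. -/
theorem classical_mediator_no_entanglement
    {A B G : Type*} [Fintype A] [Fintype B] [Fintype G]
    (n : ℕ)
    (IA : ℕ → G → G → (Matrix A A ℂ →ₗ[ℂ] Matrix A A ℂ))
    (IB : ℕ → G → G → (Matrix B B ℂ →ₗ[ℂ] Matrix B B ℂ))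
    (hIA : ∀ k, IsQCInteraction (IA k)) (hIB : ∀ k, IsQCInteraction (IB k))
    (σ : Matrix (A × B) (A × B) ℂ) (hσ : SepCone σ) (hσtr : σ.trace = 1)
    (p : G → ℝ) (hp : (∀ g, 0 ≤ p g) ∧ ∑ g, p g = 1) :
    SepCone (∑ g, evolve IA IB n (fun g => (p g : ℂ) • σ) g) := by
  have key : ∀ m, ∀ g, SepCone (evolve IA IB m (fun g => (p g : ℂ) • σ) g) := by
    intro m
    induction m with
    | zero => intro g; exact sepCone_smul hσ (hp.1 g)
    | succ m ih =>
      intro g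
      show SepCone (stepB (IB m) (stepA (IA m) (evolve IA IB m _)) g)
      unfold stepB stepA
      refine sepCone_sum _ _ fun g' _ => sepCone_blockSnd ((hIB m).1 g' g) ?_
      exact sepCone_sum _ _ fun g'' _ => sepCone_blockFst ((hIA m).1 g'' g') (ih g'')
  exact sepCone_sum _ _ fun g _ => key n g
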